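/- Let θ ∈ (0,1) and L > 0. There exists a constant C = C(L, θ) > 0, independent of the mesh size, such that for every h ∈ (0,1), every integer M_x ≥ 1 with (M_x+1)h = L, and every u : ℤ → ℝ with u_i = 0 for |i| > M_x, one has the discrete Poincaré inequality ∑_{i∈ℤ} h u_i² ≤ C ∑_{i∈ℤ} ∑_{j≠i} h² |u_i − u_j|² / (h|i−j|)^{1+2θ}. -/

import Mathlib

theorem stmt2 (θ L : ℝ) (hθ0 : 0 < θ) (hθ1 : θ < 1) (hL : 0 < L) :
    ∃ C : ℝ, 0 < C ∧
      ∀ h : ℝ, 0 < h → h < 1 → ∀ Mx : ℤ, 1 ≤ Mx → ((Mx : ℝ) + 1) * h = L →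
        ∀ u : ℤ → ℝ, (∀ i : ℤ, Mx < |i| → u i = 0) →
          ∑' i : ℤ, h * (u i) ^ 2 ≤
            C * ∑' i : ℤ, ∑' j : ℤ, if j = i then 0 else
                h ^ 2 * |u i - u j| ^ 2 / (h * |(i : ℝ) - (j : ℝ)|) ^ (1 + 2 * θ) := by
  set s : ℝ := 1 + 2 * θ with hsdef
  have hs0 : 0 < s := by simp only [hsdef]; linarith
  have hs1 : 1 < s := by simp only [hsdef]; linarith
  have hC0 : 0 < (4 * L) ^ s / L := by positivity
  refine ⟨(4 * L) ^ s / L, hC0, ?_⟩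
  intro h h0 h1 Mx hMx hMh u hu
  set F : ℤ × ℤ → ℝ := fun p => if p.2 = p.1 then 0 else
      h ^ 2 * |u p.1 - u p.2| ^ 2 / (h * |(p.1 : ℝ) - (p.2 : ℝ)|) ^ s with hFdef
  have hFnonneg : ∀ p, 0 ≤ F p := by
    intro p
    simp only [hFdef]
    split
    · exact le_refl 0
    · positivity
  set k : ℤ → ℝ := fun d => |(d : ℝ)| ^ (-s) with hkdef
  have hknonneg : ∀ d, 0 ≤ k d := fun d => Real.rpow_nonneg (abs_nonneg _) _
  have hksymm : ∀ (i j : ℤ), k (i - j) = k (j - i) := by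
    intro i j
    simp only [hkdef]
    rw [show ((i - j : ℤ) : ℝ) = ((i : ℝ) - (j : ℝ)) by push_cast; ring,
        show ((j - i : ℤ) : ℝ) = ((j : ℝ) - (i : ℝ)) by push_cast; ring, abs_sub_comm]
  have hk : Summable k := Real.summable_abs_int_rpow hs1
  set a : ℤ → ℝ := fun i => (u i) ^ 2 with hadef
  have hanonneg : ∀ i, 0 ≤ a i := fun i => sq_nonneg _
  have habs : ∀ i : ℤ, i ∉ Finset.Icc (-Mx) Mx → Mx < |i| := by
    intro i hi
    simp only [Finset.mem_Icc, not_and_or, not_le] at hi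
    rcases hi with hi | hi
    · exact lt_abs.mpr (Or.inr (by linarith))
    · exact lt_abs.mpr (Or.inl hi)
  have ha : Summable a := by
    apply summable_of_ne_finset_zero (s := Finset.Icc (-Mx) Mx)
    intro i hi
    simp [hadef, hu i (habs i hi)]
  have hprod : Summable (fun p : ℤ × ℤ => a p.1 * k p.2) :=
    ha.mul_of_nonneg hk hanonneg hknonneg
  have hA : Summable (fun p : ℤ × ℤ => a p.1 * k (p.1 - p.2)) := by
    have := (Equiv.summable_iff
      (⟨fun p => (p.1, p.1 - p.2), fun p => (p.1, p.1 - p.2),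
        fun p => by simp, fun p => by simp⟩ : ℤ × ℤ ≃ ℤ × ℤ)
      (f := fun p : ℤ × ℤ => a p.1 * k p.2)).2 hprod
    exact this.congr fun p => rfl
  have hB : Summable (fun p : ℤ × ℤ => a p.2 * k (p.1 - p.2)) := by
    rw [← (Equiv.prodComm ℤ ℤ).summable_iff]
    refine hA.congr fun p => ?_
    simp only [Function.comp_apply, Equiv.prodComm_apply, Prod.fst_swap, Prod.snd_swap]
    rw [hksymm p.1 p.2]
  set G : ℤ × ℤ → ℝ := fun p =>
      2 * h ^ 2 * h ^ (-s) * ((a p.1 + a p.2) * k (p.1 - p.2)) with hGdef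
  have hG : Summable G := by
    apply Summable.mul_left
    refine (hA.add hB).congr fun p => ?_
    ring
  have hdom : ∀ p : ℤ × ℤ, F p ≤ G p := by
    rintro ⟨i, j⟩
    simp only [hFdef, hGdef]
    by_cases hij : j = i
    · subst hij
      have hk0 : k 0 = 0 := by
        simp only [hkdef, Int.cast_zero, abs_zero]
        exact Real.zero_rpow (by linarith)
      simp [hk0]
    · rw [if_neg hij]
      have hine : (i : ℝ) ≠ (j : ℝ) := by
        exact_mod_cast fun hc => hij (by exact_mod_cast hc.symm)
      have hij' : (0 : ℝ) < |(i : ℝ) - (j : ℝ)| := by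
        rw [abs_pos, sub_ne_zero]; exact hine
      have hrw : (h * |(i : ℝ) - (j : ℝ)|) ^ s = h ^ s * |(i : ℝ) - (j : ℝ)| ^ s :=
        Real.mul_rpow (le_of_lt h0) (abs_nonneg _)
      have hknum : k (i - j) = |(i : ℝ) - (j : ℝ)| ^ (-s) := by
        simp only [hkdef]
        congr 2
        push_cast
        ring
      have hnum : |u i - u j| ^ 2 ≤ 2 * (a i + a j) := by
        rw [sq_abs]
        simp only [hadef]
        nlinarith [sq_nonneg (u i + u j)]
      have hden : (0 : ℝ) < (h * |(i : ℝ) - (j : ℝ)|) ^ s :=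
        Real.rpow_pos_of_pos (by positivity) s
      calc h ^ 2 * |u i - u j| ^ 2 / (h * |(i : ℝ) - (j : ℝ)|) ^ s
          ≤ h ^ 2 * (2 * (a i + a j)) / (h * |(i : ℝ) - (j : ℝ)|) ^ s := by
            gcongr
        _ = 2 * h ^ 2 * h ^ (-s) * ((a i + a j) * k (i - j)) := by
            rw [hrw, hknum, Real.rpow_neg (le_of_lt h0), Real.rpow_neg (le_of_lt hij')]
            have h1 : h ^ s ≠ 0 := ne_of_gt (Real.rpow_pos_of_pos h0 s)
            have h2 : |(i : ℝ) - (j : ℝ)| ^ s ≠ 0 := ne_of_gt (Real.rpow_pos_of_pos hij' s)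
            field_simp
  have hF : Summable F := Summable.of_nonneg_of_le hFnonneg hdom hG
  set I : Finset ℤ := Finset.Icc (-Mx) Mx with hIdef
  set J : Finset ℤ := Finset.Icc (Mx + 1) (2 * Mx + 1) with hJdef
  have hfin : ∑ p ∈ I ×ˢ J, F p ≤ ∑' p : ℤ × ℤ, F p :=
    Summable.sum_le_tsum _ (fun p _ => hFnonneg p) hF
  have hJcard : (J.card : ℝ) = (Mx : ℝ) + 1 := by
    simp only [hJdef, Int.card_Icc]
    rw [show 2 * Mx + 1 + 1 - (Mx + 1) = Mx + 1 by ring]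
    have h' : ((Mx + 1).toNat : ℤ) = Mx + 1 := Int.toNat_of_nonneg (by omega)
    exact_mod_cast h'
  have hstep : ∀ i ∈ I, ∀ j ∈ J, h ^ 2 * a i / (4 * L) ^ s ≤ F (i, j) := by
    intro i hi j hj
    simp only [hIdef, hJdef, Finset.mem_Icc] at hi hj
    have hij : j ≠ i := by omega
    have huj : u j = 0 := hu j (lt_abs.mpr (Or.inl (by omega)))
    have h4L : h * |(i : ℝ) - (j : ℝ)| ≤ 4 * L := by
      have hi1 : (-Mx : ℝ) ≤ i := by exact_mod_cast hi.1
      have hi2 : (i : ℝ) ≤ Mx := by exact_mod_cast hi.2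
      have hj2 : (j : ℝ) ≤ 2 * Mx + 1 := by exact_mod_cast hj.2
      have hj1 : (Mx : ℝ) + 1 ≤ j := by exact_mod_cast hj.1
      have habs2 : |(i : ℝ) - (j : ℝ)| = (j : ℝ) - i := by
        rw [abs_sub_comm, abs_of_nonneg (by linarith)]
      rw [habs2]
      calc h * ((j : ℝ) - i) ≤ h * (4 * ((Mx : ℝ) + 1)) := by
            apply mul_le_mul_of_nonneg_left _ (le_of_lt h0)
            linarith
        _ = 4 * L := by rw [← hMh]; ring
    have hpow : (h * |(i : ℝ) - (j : ℝ)|) ^ s ≤ (4 * L) ^ s := by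
      apply Real.rpow_le_rpow (by positivity) h4L (le_of_lt hs0)
    have hine : (i : ℝ) ≠ (j : ℝ) := by
      exact_mod_cast fun hc => hij (by exact_mod_cast hc.symm)
    have hij' : (0 : ℝ) < |(i : ℝ) - (j : ℝ)| := by
      rw [abs_pos, sub_ne_zero]; exact hine
    have hden : (0 : ℝ) < (h * |(i : ℝ) - (j : ℝ)|) ^ s :=
      Real.rpow_pos_of_pos (by positivity) s
    have hFval : F (i, j) = h ^ 2 * a i / (h * |(i : ℝ) - (j : ℝ)|) ^ s := by
      simp only [hFdef, if_neg hij, huj, sub_zero, sq_abs, hadef]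
    rw [hFval]
    gcongr
  have hrow : ∀ i ∈ I, L * (h * a i) / (4 * L) ^ s ≤ ∑ j ∈ J, F (i, j) := by
    intro i hi
    have h1 : ∑ j ∈ J, (h ^ 2 * a i / (4 * L) ^ s) ≤ ∑ j ∈ J, F (i, j) :=
      Finset.sum_le_sum fun j hj => hstep i hi j hj
    rw [Finset.sum_const, nsmul_eq_mul, hJcard] at h1
    refine le_trans (le_of_eq ?_) h1
    have hLh : L * h = ((Mx : ℝ) + 1) * h ^ 2 := by rw [← hMh]; ring
    field_simp
    linear_combination (-(a i)) * hMh
  have hsum : L / (4 * L) ^ s * ∑ i ∈ I, h * a i ≤ ∑ p ∈ I ×ˢ J, F p := by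
    rw [Finset.sum_product, Finset.mul_sum]
    apply Finset.sum_le_sum
    intro i hi
    refine le_trans (le_of_eq ?_) (hrow i hi)
    ring
  have hLHS : ∑' i : ℤ, h * (u i) ^ 2 = ∑ i ∈ I, h * a i := by
    apply tsum_eq_sum
    intro i hi
    rw [hu i (habs i hi)]
    ring
  have hdouble : (∑' i : ℤ, ∑' j : ℤ, if j = i then 0 else
      h ^ 2 * |u i - u j| ^ 2 / (h * |(i : ℝ) - (j : ℝ)|) ^ s) = ∑' p : ℤ × ℤ, F p := by
    rw [Summable.tsum_prod hF]
  rw [hLHS, hdouble]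
  have h4Ls : (0 : ℝ) < (4 * L) ^ s := by positivity
  calc ∑ i ∈ I, h * a i
      = (4 * L) ^ s / L * (L / (4 * L) ^ s * ∑ i ∈ I, h * a i) := by
        field_simp
    _ ≤ (4 * L) ^ s / L * ∑ p ∈ I ×ˢ J, F p :=
        mul_le_mul_of_nonneg_left hsum (le_of_lt hC0)
    _ ≤ (4 * L) ^ s / L * ∑' p : ℤ × ℤ, F p :=
        mul_le_mul_of_nonneg_left hfin (le_of_lt hC0)
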